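/- Let B = V_α² where V_α is the finite pure shear stretch with parameter α. Then any F ∈ GL⁺(3) with FFᵀ = B is of the form F = (1/√cosh(2α))·[[1, sinh(2α), 0],[0, cosh(2α), 0],[0,0,√cosh(2α)]]·Q for some Q ∈ SO(3). -/

import Mathlib

open Matrix

/-- The finite pure shear stretch `V_α`. -/
noncomputable def pureShearStretch (α : ℝ) : Matrix (Fin 3) (Fin 3) ℝ :=
  !![Real.cosh α, Real.sinh α, 0; Real.sinh α, Real.cosh α, 0; 0, 0, 1]

lemma aux_decomp (c s : ℝ) (hc : 0 < c) (hpyth : c * c - s * s = 1)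
    (F : Matrix (Fin 3) (Fin 3) ℝ) (hF : 0 < F.det)
    (hB : F * Fᵀ = !![c, s, 0; s, c, 0; 0, 0, 1]) :
    ∃ Q : Matrix (Fin 3) (Fin 3) ℝ, Q * Qᵀ = 1 ∧ Q.det = 1 ∧
      F = (1 / Real.sqrt c) • !![1, s, 0; 0, c, 0; 0, 0, Real.sqrt c] * Q := by
  have hr : 0 < Real.sqrt c := Real.sqrt_pos.mpr hc
  have hsq : Real.sqrt c * Real.sqrt c = c := Real.mul_self_sqrt hc.le
  set M : Matrix (Fin 3) (Fin 3) ℝ := !![1, s, 0; 0, c, 0; 0, 0, Real.sqrt c] with hM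
  set S : Matrix (Fin 3) (Fin 3) ℝ := (1 / Real.sqrt c) • M with hS
  set Sinv : Matrix (Fin 3) (Fin 3) ℝ :=
    !![Real.sqrt c, -s / Real.sqrt c, 0; 0, 1 / Real.sqrt c, 0; 0, 0, 1] with hSinv
  have hinv : Sinv * S = 1 := by
    rw [hS, Matrix.mul_smul, hM, hSinv]
    ext i j
    fin_cases i <;> fin_cases j <;>
      simp [Matrix.mul_fin_three, Matrix.smul_apply, Matrix.one_apply, Matrix.vecHead,
        Matrix.vecTail]
    all_goals (field_simp; try (right; linear_combination s * hsq))
    all_goals nlinarith [hsq]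
  have hinv' : S * Sinv = 1 := mul_eq_one_comm.mp hinv
  have hSST : S * Sᵀ = !![c, s, 0; s, c, 0; 0, 0, 1] := by
    rw [hS, Matrix.transpose_smul, Matrix.smul_mul, Matrix.mul_smul, smul_smul, hM]
    ext i j
    fin_cases i <;> fin_cases j <;>
      simp [Matrix.mul_fin_three, Matrix.smul_apply, Matrix.transpose_apply, Matrix.vecHead,
        Matrix.vecTail, Matrix.vecMul, dotProduct, Fin.sum_univ_three]
    all_goals (field_simp; try nlinarith [hsq, hpyth])
    all_goals linear_combination (-s) * hsq
  have hFFT : F * Fᵀ = S * Sᵀ := by rw [hB, hSST]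
  refine ⟨Sinv * F, ?_, ?_, ?_⟩
  · have h1 : (Sinv * F) * (Sinv * F)ᵀ = Sinv * (F * Fᵀ) * Sinvᵀ := by
      rw [Matrix.transpose_mul]; simp only [Matrix.mul_assoc]
    have h2 : Sinv * (S * Sᵀ) * Sinvᵀ = (Sinv * S) * (Sinv * S)ᵀ := by
      rw [Matrix.transpose_mul]; simp only [Matrix.mul_assoc]
    rw [h1, hFFT, h2, hinv]
    simp
  · have hdetF : F.det = 1 := by
      have h1 : F.det * F.det = 1 := by
        have h := congrArg Matrix.det hB
        rw [Matrix.det_mul, Matrix.det_transpose] at h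
        rw [h, Matrix.det_fin_three]
        simp [Matrix.vecHead, Matrix.vecTail]
        nlinarith [hpyth]
      nlinarith
    have hdetSinv : Sinv.det = 1 := by
      rw [hSinv, Matrix.det_fin_three]
      simp [Matrix.vecHead, Matrix.vecTail]
      field_simp
    rw [Matrix.det_mul, hdetSinv, hdetF, one_mul]
  · rw [← Matrix.mul_assoc, hinv', one_mul]

/-- Any `F ∈ GL⁺(3)` with `FFᵀ = V_α²` is a left finite simple shear composed with a
rotation `Q ∈ SO(3)`. -/
theorem deformation_for_pure_shear_stretch_squared (α : ℝ)
    (F : Matrix (Fin 3) (Fin 3) ℝ) (hF : 0 < F.det)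
    (hB : F * Fᵀ = pureShearStretch α * pureShearStretch α) :
    ∃ Q : Matrix (Fin 3) (Fin 3) ℝ, Q * Qᵀ = 1 ∧ Q.det = 1 ∧
      F = (1 / Real.sqrt (Real.cosh (2 * α))) •
          !![1, Real.sinh (2 * α), 0;
             0, Real.cosh (2 * α), 0;
             0, 0, Real.sqrt (Real.cosh (2 * α))] * Q := by
  have hB2 : pureShearStretch α * pureShearStretch α =
      !![Real.cosh (2 * α), Real.sinh (2 * α), 0;
         Real.sinh (2 * α), Real.cosh (2 * α), 0; 0, 0, 1] := by
    ext i j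
    fin_cases i <;> fin_cases j <;>
      simp [pureShearStretch, Matrix.mul_fin_three, Matrix.vecHead, Matrix.vecTail] <;>
      nlinarith [Real.cosh_sq_sub_sinh_sq α, Real.cosh_two_mul α, Real.sinh_two_mul α,
        sq_nonneg (Real.cosh α), sq (Real.cosh α)]
  rw [hB2] at hB
  exact aux_decomp (Real.cosh (2 * α)) (Real.sinh (2 * α)) (Real.cosh_pos (x := 2 * α))
    (by nlinarith [Real.cosh_sq_sub_sinh_sq (2 * α)]) F hF hB
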